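/- Let G be a p-degenerate simple graph on n vertices and let h ≥ 1. Then the number of edges of G both of whose endpoints have degree at least h in G is at most 2·p²·n/h. -/
import Mathlib


open Finset SimpleGraph
open scoped Classical

/-- `f : A → V` realizes a copy of `H` in `G`: it is injective and maps edges of `H`
to edges of `G`.  The copy itself is the subgraph of `G` whose edge set is the image
of the edge set of `H`. -/
def IsCopy {A V : Type*} (H : SimpleGraph A) (G : SimpleGraph V) (f : A → V) : Prop :=
  Function.Injective f ∧ ∀ a b : A, H.Adj a b → G.Adj (f a) (f b)

/-- `G` contains a copy of `H` (a subgraph isomorphic to `H`). -/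
def ContainsCopy {A V : Type*} (H : SimpleGraph A) (G : SimpleGraph V) : Prop :=
  ∃ f : A → V, IsCopy H G f

/-- The edge set of the copy of `H` in `G` realized by `f`. -/
noncomputable def copyEdges {A V : Type*} [Fintype A] [DecidableEq V]
    (H : SimpleGraph A) (f : A → V) : Finset (Sym2 V) :=
  H.edgeFinset.image (Sym2.map f)

/-- `𝒞` is a collection of pairwise edge-disjoint copies of `H` in `G`. -/
def EdgeDisjointCopies {A V : Type*} [Fintype A] [DecidableEq V]
    (H : SimpleGraph A) (G : SimpleGraph V) (𝒞 : Finset (A → V)) : Prop :=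
  (∀ f ∈ 𝒞, IsCopy H G f) ∧
    ∀ f ∈ 𝒞, ∀ g ∈ 𝒞, f ≠ g → Disjoint (copyEdges H f) (copyEdges H g)

/-- `G` is `p`-degenerate: every nonempty finite vertex set `U` contains a vertex with
at most `p` neighbours inside `U`. -/
def Degenerate {V : Type*} (G : SimpleGraph V) (p : ℕ) : Prop :=
  ∀ U : Finset V, U.Nonempty → ∃ v ∈ U, (U.filter fun u => G.Adj v u).card ≤ p

/-- `G` is `c`-far (in absolute number of edges) from being `H`-free: deleting any set
of at most `c` edges from `G` leaves a graph that contains a copy of `H`. -/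
def FarFromFree {A V : Type*} (H : SimpleGraph A) (G : SimpleGraph V) (c : ℝ) : Prop :=
  ∀ D : Finset (Sym2 V), (D.card : ℝ) ≤ c → ContainsCopy H (G.deleteEdges ↑D)

/-- The number of members of the collection `𝒦` whose copy contains the vertex `v`. -/
noncomputable def collDeg {A V : Type*} (𝒦 : Finset (A → V)) (v : V) : ℕ :=
  (𝒦.filter fun φ => v ∈ Set.range φ).card

lemma deg_edge_bound {V : Type*} [Fintype V] [DecidableEq V] (G : SimpleGraph V) (p : ℕ)
    (hdeg : Degenerate G p) :
    ∀ U : Finset V, (G.edgeFinset.filter fun e => ∀ v ∈ e, v ∈ U).card ≤ p * U.card := by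
  intro U
  induction U using Finset.strongInduction with
  | _ U ih =>
    rcases U.eq_empty_or_nonempty with rfl | hU
    · have : (G.edgeFinset.filter fun e => ∀ v ∈ e, v ∈ (∅ : Finset V)) = ∅ := by
        apply Finset.filter_eq_empty_iff.2
        intro e _ he
        induction e with
        | h a b => exact absurd (he a (by simp)) (by simp)
      rw [this]
      simp
    · obtain ⟨v, hv, hvp⟩ := hdeg U hU
      set A := G.edgeFinset.filter fun e => ∀ w ∈ e, w ∈ U with hA
      have hsplit : (A.filter fun e => v ∈ e).card + (A.filter fun e => ¬ v ∈ e).card = A.card :=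
        Finset.card_filter_add_card_filter_not _
      have h1 : (A.filter fun e => v ∈ e).card ≤ p := by
        have hsub : (A.filter fun e => v ∈ e) ⊆
            (U.filter fun u => G.Adj v u).image (fun u => s(v, u)) := by
          intro e he
          simp only [Finset.mem_filter, hA, SimpleGraph.mem_edgeFinset] at he
          obtain ⟨⟨heE, hU'⟩, hve⟩ := he
          induction e with
          | h a b =>
            rw [Sym2.mem_iff] at hve
            rcases hve with rfl | rfl
            · refine Finset.mem_image.2 ⟨b, Finset.mem_filter.2 ⟨hU' b (by simp), ?_⟩, rfl⟩
              exact (SimpleGraph.mem_edgeSet _).1 heE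
            · refine Finset.mem_image.2 ⟨a, Finset.mem_filter.2 ⟨hU' a (by simp), ?_⟩, ?_⟩
              · exact ((SimpleGraph.mem_edgeSet _).1 heE).symm
              · exact Sym2.eq_swap
        calc (A.filter fun e => v ∈ e).card ≤ _ := Finset.card_le_card hsub
          _ ≤ (U.filter fun u => G.Adj v u).card := Finset.card_image_le
          _ ≤ p := hvp
      have h2 : (A.filter fun e => ¬ v ∈ e) ⊆
          G.edgeFinset.filter fun e => ∀ w ∈ e, w ∈ U.erase v := by
        intro e he
        simp only [Finset.mem_filter, hA] at he ⊢
        exact ⟨he.1.1, fun w hw => Finset.mem_erase.2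
          ⟨fun h => he.2 (h ▸ hw), he.1.2 w hw⟩⟩
      have h3 := ih (U.erase v) (Finset.erase_ssubset hv)
      have hcard : (U.erase v).card = U.card - 1 := Finset.card_erase_of_mem hv
      have hc1 : 1 ≤ U.card := Finset.card_pos.2 hU
      calc A.card = _ + _ := hsplit.symm
        _ ≤ p + p * (U.card - 1) := by
            refine Nat.add_le_add h1 ?_
            exact le_trans (Finset.card_le_card h2) (by rw [← hcard] at *; exact h3)
        _ = p * U.card := by
            obtain ⟨k, hk⟩ := Nat.exists_eq_succ_of_ne_zero (by omega : U.card ≠ 0)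
            rw [hk, Nat.succ_sub_one, Nat.mul_succ]
            omega

/-- In a `p`-degenerate graph on `n` vertices, the number of edges both of
whose endpoints have degree at least `h` is at most `2·p²·n/h`. -/
theorem statement_3 {V : Type*} [Fintype V] [DecidableEq V]
    (p n h : ℕ) (hh : 1 ≤ h)
    (G : SimpleGraph V) (hV : Fintype.card V = n)
    (hdeg : Degenerate G p) :
    ((G.edgeFinset.filter fun e => ∀ v ∈ e, h ≤ G.degree v).card : ℝ)
      ≤ 2 * p ^ 2 * n / h := by
  set S := Finset.univ.filter fun v => h ≤ G.degree v with hS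
  have hedge : (G.edgeFinset.filter fun e => ∀ v ∈ e, h ≤ G.degree v)
      = G.edgeFinset.filter fun e => ∀ v ∈ e, v ∈ S := by
    apply Finset.filter_congr
    intro e _
    simp [hS]
  have hb := deg_edge_bound G p hdeg S
  have hEbound : G.edgeFinset.card ≤ p * n := by
    have h0 := deg_edge_bound G p hdeg Finset.univ
    have : (G.edgeFinset.filter fun e => ∀ v ∈ e, v ∈ (Finset.univ : Finset V))
        = G.edgeFinset := Finset.filter_true_of_mem (fun e _ => fun v _ => Finset.mem_univ v)
    rw [this, Finset.card_univ, hV] at h0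
    exact h0
  have hSsum : S.card * h ≤ 2 * (p * n) := by
    calc S.card * h = S.card • h := rfl
      _ ≤ ∑ v ∈ S, G.degree v := Finset.card_nsmul_le_sum S _ h
            (fun v hv => by simpa [hS] using (Finset.mem_filter.1 hv).2)
      _ ≤ ∑ v, G.degree v := Finset.sum_le_sum_of_subset (Finset.filter_subset _ _)
      _ = 2 * G.edgeFinset.card := SimpleGraph.sum_degrees_eq_twice_card_edges G
      _ ≤ 2 * (p * n) := Nat.mul_le_mul_left 2 hEbound
  have key : (G.edgeFinset.filter fun e => ∀ v ∈ e, h ≤ G.degree v).card * h ≤ 2 * p ^ 2 * n := by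
    calc (G.edgeFinset.filter fun e => ∀ v ∈ e, h ≤ G.degree v).card * h
        ≤ (p * S.card) * h := Nat.mul_le_mul_right h (hedge ▸ hb)
      _ = p * (S.card * h) := by ring
      _ ≤ p * (2 * (p * n)) := Nat.mul_le_mul_left p hSsum
      _ = 2 * p ^ 2 * n := by ring
  rw [le_div_iff₀ (by exact_mod_cast hh : (0 : ℝ) < h)]
  exact_mod_cast key
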